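/- arXiv:math/0609679 — 2 statements merged into one kernel-verified Lean document; each statement's English description precedes it below -/
import Mathlib

section
/- Let (Ω, ℱ, ℙ) be a probability space with a filtration (ℱ_t)_{t ≥ 0}, and let (X_t)_{t ≥ 0} be a real-valued adapted process such that X_0 is constant and, for all 0 ≤ s ≤ t, the increment X_t − X_s is independent of ℱ_s and has the Gaussian law N(0, t − s). Then for all 0 ≤ s ≤ t and all n ∈ ℕ, E[X_t^n | ℱ_s] = H_n(X_s, s − t) almost surely. In particular, for fixed t, the process (H_n(X_s, s − t))_{0 ≤ s ≤ t} is a martingale. -/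
open MeasureTheory ProbabilityTheory
open scoped NNReal ENNReal

/-- The `n`-th space–time Hermite polynomial
`H_n(x, t) = Σ_{j=0}^{⌊n/2⌋} (n! / (j! (n-2j)! 2^j)) (-t)^j x^(n-2j)`. -/
noncomputable def hermiteST (n : ℕ) (x t : ℝ) : ℝ :=
  ∑ j ∈ Finset.range (n / 2 + 1),
    ((n.factorial : ℝ) / ((j.factorial : ℝ) * ((n - 2 * j).factorial : ℝ) * 2 ^ j))
      * (-t) ^ j * x ^ (n - 2 * j)

open Real Filter Set

lemma aux_pow_le_exp (n : ℕ) {x : ℝ} (hx : 0 ≤ x) : x ^ n ≤ n.factorial * Real.exp x := by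
  have h := Real.sum_le_exp_of_nonneg hx (n + 1)
  have h2 : x ^ n / n.factorial ≤ Real.exp x := by
    refine le_trans ?_ h
    exact Finset.single_le_sum (f := fun i => x ^ i / i.factorial)
      (fun i _ => by positivity) (Finset.self_mem_range_succ n)
  have hn : (0:ℝ) < n.factorial := by positivity
  rw [div_le_iff₀ hn] at h2
  linarith [h2]

lemma aux_bound {b : ℝ} (hb : 0 < b) (n : ℕ) (x : ℝ) :
    |x| ^ n * Real.exp (-b * x ^ 2) ≤
      (n.factorial * Real.exp (1 / (2 * b))) * Real.exp (-(b / 2) * x ^ 2) := by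
  have h1 : |x| ^ n ≤ n.factorial * Real.exp |x| := aux_pow_le_exp n (abs_nonneg x)
  have h2 : |x| + (-b * x ^ 2) ≤ 1 / (2 * b) + (-(b / 2) * x ^ 2) := by
    have hx2 : x ^ 2 = |x| ^ 2 := (sq_abs x).symm
    have h2b : (0:ℝ) < 2 * b := by positivity
    have key : (|x| + -b * x ^ 2) * (2 * b) ≤ (1 / (2 * b) + -(b / 2) * x ^ 2) * (2 * b) := by
      have h5 : (1 / (2 * b)) * (2 * b) = 1 := by field_simp
      conv_rhs => rw [add_mul, h5]
      rw [hx2]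
      nlinarith [sq_nonneg (b * |x| - 1)]
    exact le_of_mul_le_mul_right key h2b
  calc |x| ^ n * Real.exp (-b * x ^ 2)
      ≤ (n.factorial * Real.exp |x|) * Real.exp (-b * x ^ 2) := by
        exact mul_le_mul_of_nonneg_right h1 (Real.exp_pos _).le
    _ = n.factorial * Real.exp (|x| + -b * x ^ 2) := by rw [Real.exp_add]; ring
    _ ≤ n.factorial * Real.exp (1 / (2 * b) + (-(b / 2) * x ^ 2)) := by
        refine mul_le_mul_of_nonneg_left (Real.exp_le_exp.mpr h2) (by positivity)
    _ = (n.factorial * Real.exp (1 / (2 * b))) * Real.exp (-(b / 2) * x ^ 2) := by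
        rw [Real.exp_add]; ring

lemma integrable_pow_mul_gauss {b : ℝ} (hb : 0 < b) (n : ℕ) :
    Integrable fun x : ℝ => x ^ n * Real.exp (-b * x ^ 2) := by
  have hi : Integrable fun x : ℝ => (n.factorial * Real.exp (1 / (2 * b))) *
      Real.exp (-(b / 2) * x ^ 2) :=
    (integrable_exp_neg_mul_sq (by positivity)).const_mul _
  refine hi.mono' ?_ ?_
  · exact ((measurable_id.pow_const n).mul
      (((measurable_id.pow_const 2).const_mul (-b)).exp)).aestronglyMeasurable
  · refine ae_of_all _ fun x => ?_
    rw [norm_mul, norm_pow, norm_eq_abs, norm_eq_abs, abs_of_pos (Real.exp_pos _)]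
    calc |x| ^ n * Real.exp (-b * x ^ 2)
        ≤ (n.factorial * Real.exp (1 / (2 * b))) * Real.exp (-(b / 2) * x ^ 2) :=
          aux_bound hb n x

lemma tendsto_pow_gauss_atTop {b : ℝ} (hb : 0 < b) (n : ℕ) :
    Tendsto (fun x : ℝ => x ^ n * Real.exp (-b * x ^ 2)) atTop (nhds 0) ∧
    Tendsto (fun x : ℝ => x ^ n * Real.exp (-b * x ^ 2)) atBot (nhds 0) := by
  have hgauss : ∀ l : Filter ℝ, Tendsto (fun x : ℝ => x ^ 2) l atTop →
      Tendsto (fun x : ℝ => Real.exp (-(b/2) * x ^ 2)) l (nhds 0) := by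
    intro l hl
    have h1 : Tendsto (fun x : ℝ => (b/2) * x ^ 2) l atTop :=
      hl.const_mul_atTop (by positivity)
    have h2 : Tendsto (fun x : ℝ => -((b/2) * x ^ 2)) l atBot := tendsto_neg_atBot_iff.mpr h1
    exact Real.tendsto_exp_atBot.comp (h2.congr fun x => by ring)
  have key : ∀ l : Filter ℝ, Tendsto (fun x : ℝ => x ^ 2) l atTop →
      Tendsto (fun x : ℝ => x ^ n * Real.exp (-b * x ^ 2)) l (nhds 0) := by
    intro l hl
    have h0 := (hgauss l hl).const_mul ((n.factorial : ℝ) * Real.exp (1 / (2 * b)))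
    rw [mul_zero] at h0
    refine squeeze_zero_norm (fun x => ?_) h0
    rw [norm_mul, norm_pow, norm_eq_abs, norm_eq_abs, abs_of_pos (Real.exp_pos _)]
    exact aux_bound hb n x
  constructor
  · exact key atTop (tendsto_pow_atTop two_ne_zero)
  · refine key atBot ?_
    have h1 : Tendsto (fun x : ℝ => |x| ^ 2) atBot atTop :=
      (tendsto_pow_atTop (n := 2) two_ne_zero).comp tendsto_abs_atBot_atTop
    exact h1.congr fun x => sq_abs x

lemma integral_deriv_eq_zero' {g g' : ℝ → ℝ} (hd : ∀ x, HasDerivAt g (g' x) x)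
    (hi : Integrable g') (htop : Tendsto g atTop (nhds 0))
    (hbot : Tendsto g atBot (nhds 0)) : ∫ x, g' x = 0 := by
  have h1 : ∫ x in Ioi (0:ℝ), g' x = 0 - g 0 :=
    integral_Ioi_of_hasDerivAt_of_tendsto' (fun x _ => hd x) hi.integrableOn htop
  have h2 : ∫ x in Iic (0:ℝ), g' x = g 0 - 0 :=
    integral_Iic_of_hasDerivAt_of_tendsto' (fun x _ => hd x) hi.integrableOn hbot
  rw [← integral_add_compl (measurableSet_Ioi (a := (0:ℝ))) hi, compl_Ioi, h1, h2]
  ring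

lemma hasDerivAt_gauss_aux {b : ℝ} (hb : 0 < b) (n : ℕ) (x : ℝ) :
    HasDerivAt (fun x : ℝ => -(1/(2*b)) * (x ^ (n+1) * Real.exp (-b * x ^ 2)))
      (x ^ (n + 2) * Real.exp (-b * x ^ 2)
        - (n+1)/(2*b) * (x ^ n * Real.exp (-b * x ^ 2))) x := by
  have h1 : HasDerivAt (fun x : ℝ => -b * x ^ 2) (-b * (2 * x ^ 1)) x :=
    (hasDerivAt_pow 2 x).const_mul (-b)
  have h2 : HasDerivAt (fun x : ℝ => Real.exp (-b * x ^ 2))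
      (Real.exp (-b * x ^ 2) * (-b * (2 * x ^ 1))) x := h1.exp
  have h3 := ((hasDerivAt_pow (n+1) x).mul h2).const_mul (-(1/(2*b)))
  refine h3.congr_deriv ?_
  push_cast
  field_simp
  ring

lemma tendsto_const_mul_pow_gauss {b : ℝ} (hb : 0 < b) (c : ℝ) (n : ℕ) :
    Tendsto (fun x : ℝ => c * (x ^ n * Real.exp (-b * x ^ 2))) atTop (nhds 0) ∧
    Tendsto (fun x : ℝ => c * (x ^ n * Real.exp (-b * x ^ 2))) atBot (nhds 0) := by
  obtain ⟨h1, h2⟩ := tendsto_pow_gauss_atTop hb n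
  constructor
  · simpa using h1.const_mul c
  · simpa using h2.const_mul c

lemma gauss_m_rec {b : ℝ} (hb : 0 < b) (n : ℕ) :
    ∫ x : ℝ, x ^ (n+2) * Real.exp (-b * x ^ 2)
      = (n+1)/(2*b) * ∫ x : ℝ, x ^ n * Real.exp (-b * x ^ 2) := by
  have hi2 := integrable_pow_mul_gauss hb (n+2)
  have hin := integrable_pow_mul_gauss hb n
  have hi : Integrable (fun x : ℝ => x ^ (n + 2) * Real.exp (-b * x ^ 2)
      - (n+1)/(2*b) * (x ^ n * Real.exp (-b * x ^ 2))) :=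
    hi2.sub (hin.const_mul _)
  have h0 := integral_deriv_eq_zero' (hasDerivAt_gauss_aux hb n) hi
    (tendsto_const_mul_pow_gauss hb (-(1/(2*b))) (n+1)).1
    (tendsto_const_mul_pow_gauss hb (-(1/(2*b))) (n+1)).2
  rw [integral_sub hi2 (hin.const_mul _), integral_const_mul, sub_eq_zero] at h0
  exact h0

lemma gauss_m_odd {b : ℝ} (hb : 0 < b) (j : ℕ) :
    ∫ x : ℝ, x ^ (2*j+1) * Real.exp (-b * x ^ 2) = 0 := by
  induction j with
  | zero =>
    have hd : ∀ x : ℝ, HasDerivAt (fun x : ℝ => -(1/(2*b)) * Real.exp (-b * x ^ 2))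
        (x ^ 1 * Real.exp (-b * x ^ 2)) x := by
      intro x
      have h1 : HasDerivAt (fun x : ℝ => -b * x ^ 2) (-b * (2 * x ^ 1)) x :=
        (hasDerivAt_pow 2 x).const_mul (-b)
      have h3 := h1.exp.const_mul (-(1/(2*b)))
      refine h3.congr_deriv ?_
      field_simp
    have htop : Tendsto (fun x : ℝ => -(1/(2*b)) * Real.exp (-b * x ^ 2)) atTop (nhds 0) :=
      ((tendsto_const_mul_pow_gauss hb (-(1/(2*b))) 0).1).congr fun x => by ring
    have hbot : Tendsto (fun x : ℝ => -(1/(2*b)) * Real.exp (-b * x ^ 2)) atBot (nhds 0) :=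
      ((tendsto_const_mul_pow_gauss hb (-(1/(2*b))) 0).2).congr fun x => by ring
    simpa using integral_deriv_eq_zero' hd (integrable_pow_mul_gauss hb 1) htop hbot
  | succ j ih =>
    rw [show 2*(j+1)+1 = (2*j+1)+2 by ring, gauss_m_rec hb (2*j+1), ih, mul_zero]

lemma gauss_m_even {b : ℝ} (hb : 0 < b) (j : ℕ) :
    ∫ x : ℝ, x ^ (2*j) * Real.exp (-b * x ^ 2)
      = ((2*j).factorial / (j.factorial * 2 ^ j * (2*b) ^ j)) * Real.sqrt (π / b) := by
  induction j with
  | zero => simpa using integral_gaussian b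
  | succ j ih =>
    rw [show 2*(j+1) = (2*j)+2 by ring, gauss_m_rec hb (2*j), ih]
    have h1 : ((2*j+2).factorial : ℝ) = (2*j+2) * (2*j+1) * (2*j).factorial := by
      rw [show 2*j+2 = (2*j+1)+1 by ring, Nat.factorial_succ, Nat.factorial_succ]
      push_cast; ring
    have h2 : ((j+1).factorial : ℝ) = (j+1) * j.factorial := by
      rw [Nat.factorial_succ]; push_cast; ring
    rw [h1, h2]
    have hj : (j.factorial : ℝ) ≠ 0 := by positivity
    have hb' : (2*b) ≠ 0 := by positivity
    push_cast
    field_simp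
    ring

lemma integral_fun_gaussianReal {v : ℝ≥0} (hv : v ≠ 0) (f : ℝ → ℝ) :
    ∫ x, f x ∂(gaussianReal 0 v) = ∫ x, gaussianPDFReal 0 v x * f x := by
  rw [gaussianReal_of_var_ne_zero _ hv]
  have hmeas : Measurable fun x => (gaussianPDFReal 0 v x).toNNReal :=
    (measurable_gaussianPDFReal 0 v).real_toNNReal
  have : (gaussianPDF 0 v) = fun x => ((gaussianPDFReal 0 v x).toNNReal : ℝ≥0∞) := by
    ext x; rfl
  rw [this, integral_withDensity_eq_integral_smul hmeas]
  congr 1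
  ext x
  rw [NNReal.smul_def, smul_eq_mul, Real.coe_toNNReal _ (gaussianPDFReal_nonneg 0 v x)]

lemma gaussianPDFReal_zero_eq {v : ℝ≥0} (x : ℝ) :
    gaussianPDFReal 0 v x = (Real.sqrt (2 * π * v))⁻¹ * Real.exp (-(2*(v:ℝ))⁻¹ * x ^ 2) := by
  rw [gaussianPDFReal]
  congr 1
  rw [sub_zero]
  congr 1
  field_simp

lemma integrable_pow_gaussianReal (v : ℝ≥0) (n : ℕ) :
    Integrable (fun x => x ^ n) (gaussianReal 0 v) := by
  by_cases hv : v = 0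
  · subst hv
    rw [gaussianReal_zero_var]
    exact (integrable_const ((0:ℝ) ^ n)).congr (ae_eq_dirac fun x : ℝ => x ^ n).symm
  · have hvpos : (0:ℝ) < v := NNReal.coe_pos.mpr (pos_iff_ne_zero.mpr hv)
    have hb : (0:ℝ) < (2*(v:ℝ))⁻¹ := by positivity
    rw [gaussianReal_of_var_ne_zero _ hv]
    have hmeas : Measurable fun x => (gaussianPDFReal 0 v x).toNNReal :=
      (measurable_gaussianPDFReal 0 v).real_toNNReal
    have h0 : (gaussianPDF 0 v) = fun x => ((gaussianPDFReal 0 v x).toNNReal : ℝ≥0∞) := by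
      ext x; rfl
    rw [h0, integrable_withDensity_iff_integrable_smul hmeas]
    have : Integrable (fun x : ℝ => (Real.sqrt (2 * π * v))⁻¹ *
        (x ^ n * Real.exp (-(2*(v:ℝ))⁻¹ * x ^ 2))) :=
      (integrable_pow_mul_gauss hb n).const_mul _
    refine this.congr (ae_of_all _ fun x => ?_)
    dsimp only
    rw [NNReal.smul_def, smul_eq_mul, Real.coe_toNNReal _ (gaussianPDFReal_nonneg 0 v x),
      gaussianPDFReal_zero_eq]
    ring

lemma integral_pow_gaussianReal_odd (v : ℝ≥0) (j : ℕ) :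
    ∫ x, x ^ (2*j+1) ∂(gaussianReal 0 v) = 0 := by
  by_cases hv : v = 0
  · subst hv; simp [gaussianReal_zero_var]
  · have hvpos : (0:ℝ) < v := NNReal.coe_pos.mpr (pos_iff_ne_zero.mpr hv)
    have hb : (0:ℝ) < (2*(v:ℝ))⁻¹ := by positivity
    rw [integral_fun_gaussianReal hv]
    have : ∀ x : ℝ, gaussianPDFReal 0 v x * x ^ (2*j+1)
        = (Real.sqrt (2 * π * v))⁻¹ * (x ^ (2*j+1) * Real.exp (-(2*(v:ℝ))⁻¹ * x ^ 2)) := by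
      intro x; rw [gaussianPDFReal_zero_eq]; ring
    simp_rw [this]
    rw [integral_const_mul, gauss_m_odd hb j, mul_zero]

lemma integral_pow_gaussianReal_even (v : ℝ≥0) (j : ℕ) :
    ∫ x, x ^ (2*j) ∂(gaussianReal 0 v)
      = (v:ℝ) ^ j * (2*j).factorial / (2 ^ j * j.factorial) := by
  by_cases hv : v = 0
  · subst hv
    simp only [gaussianReal_zero_var, integral_dirac]
    rcases Nat.eq_zero_or_pos j with rfl | hj
    · simp
    · rw [zero_pow (by omega : 2*j ≠ 0), NNReal.coe_zero, zero_pow (by omega : j ≠ 0),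
        zero_mul, zero_div]
  · have hvpos : (0:ℝ) < v := NNReal.coe_pos.mpr (pos_iff_ne_zero.mpr hv)
    have hb : (0:ℝ) < (2*(v:ℝ))⁻¹ := by positivity
    rw [integral_fun_gaussianReal hv]
    have : ∀ x : ℝ, gaussianPDFReal 0 v x * x ^ (2*j)
        = (Real.sqrt (2 * π * v))⁻¹ * (x ^ (2*j) * Real.exp (-(2*(v:ℝ))⁻¹ * x ^ 2)) := by
      intro x; rw [gaussianPDFReal_zero_eq]; ring
    simp_rw [this]
    rw [integral_const_mul, gauss_m_even hb j]
    have hsqrt : Real.sqrt (π / (2*(v:ℝ))⁻¹) = Real.sqrt (2 * π * v) := by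
      congr 1
      field_simp
    rw [hsqrt]
    have h2b : (2 * (2*(v:ℝ))⁻¹) ^ j = (v:ℝ)⁻¹ ^ j := by
      congr 1
      field_simp
    rw [h2b]
    have hs : Real.sqrt (2 * π * v) ≠ 0 := by
      refine Real.sqrt_ne_zero'.mpr (by positivity)
    have hfj : (j.factorial : ℝ) ≠ 0 := by positivity
    field_simp
    rw [← mul_pow, one_div, inv_mul_cancel₀ hvpos.ne', one_pow]


lemma sum_eq_hermite (n : ℕ) (x u : ℝ) (E : ℕ → ℝ)
    (hodd : ∀ j, E (2*j+1) = 0)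
    (heven : ∀ j, E (2*j) = u ^ j * (2*j).factorial / (2 ^ j * (j.factorial))) :
    ∑ k ∈ Finset.range (n+1), x ^ (n-k) * (E k * (n.choose k : ℝ))
      = hermiteST n x (-u) := by
  have hinj : Set.InjOn (fun j => 2 * j) (Finset.range (n/2+1)) := fun a _ b _ h => by simp only at h; omega
  have hsub : (Finset.range (n/2+1)).image (fun j => 2 * j) ⊆ Finset.range (n+1) := by
    intro k hk
    simp only [Finset.mem_image, Finset.mem_range] at hk ⊢
    omega
  rw [← Finset.sum_subset hsub ?hz]
  case hz =>
    intro k hk hk'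
    simp only [Finset.mem_image, Finset.mem_range] at hk hk'
    have hodd' : k % 2 = 1 := by
      by_contra h
      exact hk' ⟨k/2, by omega, by omega⟩
    have : k = 2 * (k/2) + 1 := by omega
    rw [this, hodd (k/2), zero_mul, mul_zero]
  rw [Finset.sum_image (fun a ha b hb h => hinj ha hb h)]
  unfold hermiteST
  refine Finset.sum_congr rfl fun j hj => ?_
  have hjn : 2 * j ≤ n := by
    simp only [Finset.mem_range] at hj
    omega
  have hchoose : (n.choose (2*j) : ℝ)
      = n.factorial / ((2*j).factorial * (n - 2*j).factorial) := by
    rw [eq_div_iff (by positivity)]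
    rw [← mul_assoc]
    exact_mod_cast Nat.choose_mul_factorial_mul_factorial hjn
  rw [heven, hchoose, neg_neg]
  have h1 : ((2*j).factorial : ℝ) ≠ 0 := by positivity
  have h2 : ((n - 2*j).factorial : ℝ) ≠ 0 := by positivity
  have h3 : (j.factorial : ℝ) ≠ 0 := by positivity
  field_simp

/-- Let `(X_t)_{t ≥ 0}` be a real adapted process starting from a constant, whose increments
`X_t - X_s` (for `0 ≤ s ≤ t`) are independent of `ℱ_s` with law `N(0, t - s)`.  Then
`E[X_t^n | ℱ_s] = H_n(X_s, s - t)` a.s. for `0 ≤ s ≤ t`; in particular, for every fixed `t`,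
the process `(H_n(X_s, s - t))_{0 ≤ s ≤ t}` is a martingale. -/
theorem condexp_pow_eq_hermiteST
    (Ω : Type*) [m0 : MeasurableSpace Ω] (P : Measure Ω) [IsProbabilityMeasure P]
    (ℱ : Filtration ℝ m0) (X : ℝ → Ω → ℝ) (hadapt : Adapted ℱ X)
    (hX0 : ∃ c : ℝ, X 0 = fun _ => c)
    (hindep : ∀ s t : ℝ, 0 ≤ s → s ≤ t →
      Indep (MeasurableSpace.comap (fun ω => X t ω - X s ω) inferInstance) (ℱ s) P)
    (hlaw : ∀ s t : ℝ, 0 ≤ s → s ≤ t →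
      P.map (fun ω => X t ω - X s ω) = gaussianReal 0 (t - s).toNNReal) :
    (∀ s t : ℝ, 0 ≤ s → s ≤ t → ∀ n : ℕ,
      P[fun ω => (X t ω) ^ n|ℱ s] =ᵐ[P] fun ω => hermiteST n (X s ω) (s - t))
    ∧ (∀ t : ℝ, ∀ n : ℕ, ∀ s' s : ℝ, 0 ≤ s' → s' ≤ s → s ≤ t →
      P[fun ω => hermiteST n (X s ω) (s - t)|ℱ s'] =ᵐ[P]
        fun ω => hermiteST n (X s' ω) (s' - t)) := by
  have main : ∀ s t : ℝ, 0 ≤ s → s ≤ t → ∀ n : ℕ,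
      P[fun ω => (X t ω) ^ n|ℱ s] =ᵐ[P] fun ω => hermiteST n (X s ω) (s - t) := by
    intro s t hs hst n
    obtain ⟨c, hc⟩ := hX0
    set v : ℝ≥0 := (t - s).toNNReal with hv
    set Z : Ω → ℝ := fun ω => X t ω - X s ω with hZdef
    have hmapZ : P.map Z = gaussianReal 0 v := hlaw s t hs hst
    have hXs_sm : StronglyMeasurable[ℱ s] (X s) := (hadapt s).stronglyMeasurable
    have hXs_meas : Measurable (X s) := (hXs_sm.mono (ℱ.le s)).measurable
    have hXt_meas : Measurable (X t) := (hadapt t).mono (ℱ.le t) le_rfl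
    have hZmeas : Measurable Z := hXt_meas.sub hXs_meas
    have key_int : ∀ (W : Ω → ℝ) (w : ℝ≥0), Measurable W → P.map W = gaussianReal 0 w →
        ∀ k : ℕ, Integrable (fun ω => W ω ^ k) P := by
      intro W w hW hmap k
      have h := integrable_pow_gaussianReal w k
      rw [← hmap, integrable_map_measure (measurable_id'.pow_const k).aestronglyMeasurable
        hW.aemeasurable] at h
      exact h
    have hZint : ∀ k, Integrable (fun ω => Z ω ^ k) P := key_int Z v hZmeas hmapZ
    have hEZ : ∀ k : ℕ, ∫ ω, Z ω ^ k ∂P = ∫ x, x ^ k ∂(gaussianReal 0 v) := by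
      intro k
      rw [← hmapZ, integral_map hZmeas.aemeasurable
        (measurable_id'.pow_const k).aestronglyMeasurable]
    have hX0meas : Measurable (X 0) := (hadapt 0).mono (ℱ.le 0) le_rfl
    have hZ0meas : Measurable (fun ω => X s ω - X 0 ω) := hXs_meas.sub hX0meas
    have hZ0int : ∀ k, Integrable (fun ω => (X s ω - X 0 ω) ^ k) P :=
      key_int _ _ hZ0meas (hlaw 0 s le_rfl hs)
    have hYint : ∀ m : ℕ, Integrable (fun ω => X s ω ^ m) P := by
      intro m
      have hrep : (fun ω => X s ω ^ m) = fun ω =>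
          ∑ k ∈ Finset.range (m+1), (X s ω - X 0 ω) ^ k * c ^ (m-k) * (m.choose k : ℝ) := by
        funext ω
        rw [← add_pow]
        congr 1
        have h0 : X 0 ω = c := by rw [hc]
        linarith
      rw [hrep]
      exact integrable_finset_sum _ fun k _ => ((hZ0int k).mul_const _).mul_const _
    have hIF : IndepFun Z (X s) P :=
      indep_of_indep_of_le_right (hindep s t hs hst) (measurable_iff_comap_le.mp hXs_sm.measurable)
    have hIFk : ∀ k m : ℕ, IndepFun (fun ω => Z ω ^ k) (fun ω => X s ω ^ m) P := fun k m =>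
      hIF.comp (measurable_id.pow_const k) (measurable_id.pow_const m)
    have hMulInt : ∀ k m : ℕ, Integrable (fun ω => Z ω ^ k * X s ω ^ m) P := fun k m =>
      (hIFk k m).integrable_mul (hZint k) (hYint m)
    set F : ℕ → Ω → ℝ := fun k ω => Z ω ^ k * X s ω ^ (n-k) * (n.choose k : ℝ) with hF
    have hexp : (fun ω => X t ω ^ n) = ∑ k ∈ Finset.range (n+1), F k := by
      funext ω
      rw [Finset.sum_apply]
      simp only [hF]
      rw [← add_pow]
      congr 1
      simp only [hZdef]
      ring
    rw [hexp]
    have hint : ∀ k ∈ Finset.range (n+1), Integrable (F k) P :=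
      fun k _ => (hMulInt k (n-k)).mul_const _
    refine (condExp_finsetSum hint (ℱ s)).trans ?_
    set E : ℕ → ℝ := fun k => ∫ x, x ^ k ∂(gaussianReal 0 v) with hE
    have hterm : ∀ k ∈ Finset.range (n+1),
        (P[F k|ℱ s]) =ᵐ[P] fun ω => X s ω ^ (n-k) * (E k * (n.choose k : ℝ)) := by
      intro k _
      set f : Ω → ℝ := fun ω => X s ω ^ (n-k) with hf
      set g : Ω → ℝ := fun ω => Z ω ^ k * (n.choose k : ℝ) with hg
      have hfg : F k = f * g := by
        funext ω; simp only [hF, hf, hg, Pi.mul_apply]; ring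
      rw [hfg]
      have hgint : Integrable g P := (hZint k).mul_const _
      have hfgint : Integrable (f * g) P := by
        rw [← hfg]; exact (hMulInt k (n-k)).mul_const _
      refine (condExp_mul_of_stronglyMeasurable_left (hXs_sm.pow _) hfgint hgint).trans ?_
      have hgm : StronglyMeasurable[MeasurableSpace.comap Z inferInstance] g := by
        have hZm : Measurable[MeasurableSpace.comap Z inferInstance] Z :=
          measurable_iff_comap_le.mpr le_rfl
        exact ((hZm.pow_const k).mul_const _).stronglyMeasurable
      have hcond : P[g|ℱ s] =ᵐ[P] fun _ => ∫ ω, g ω ∂P :=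
        condExp_indep_eq (measurable_iff_comap_le.mp hZmeas) (ℱ.le s) hgm
          (hindep s t hs hst)
      have hval : ∫ ω, g ω ∂P = E k * (n.choose k : ℝ) := by
        simp only [hg]
        rw [integral_mul_const, hEZ k]
      filter_upwards [hcond] with ω hω
      simp only [Pi.mul_apply, hω, hval, hf, Pi.pow_apply]
    refine (eventuallyEq_sum hterm).trans ?_
    refine Filter.EventuallyEq.of_eq ?_
    funext ω
    rw [Finset.sum_apply]
    have hu : (v : ℝ) = t - s := Real.coe_toNNReal _ (by linarith)
    have hst' : s - t = -(t - s) := by ring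
    rw [hst', ← sum_eq_hermite n (X s ω) (t - s) E ?hodd ?heven]
    case hodd =>
      intro j
      simp only [hE]
      exact integral_pow_gaussianReal_odd v j
    case heven =>
      intro j
      simp only [hE]
      rw [integral_pow_gaussianReal_even v j, hu]
  refine ⟨main, ?_⟩
  intro t n s' s hs' hs's hst
  have h1 := main s t (le_trans hs' hs's) hst n
  have h2 := main s' t hs' (le_trans hs's hst) n
  have h3 : P[fun ω => hermiteST n (X s ω) (s-t)|ℱ s'] =ᵐ[P]
      P[P[fun ω => X t ω ^ n|ℱ s]|ℱ s'] := condExp_congr_ae h1.symm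
  have h4 : P[P[fun ω => X t ω ^ n|ℱ s]|ℱ s'] =ᵐ[P] P[fun ω => X t ω ^ n|ℱ s'] :=
    condExp_condExp_of_le (ℱ.mono hs's) (ℱ.le s)
  exact h3.trans (h4.trans h2)
end

section
/- Let d ≥ 2, let e be a unit vector in ℝ^d, and let r > −1. Then the function θ ↦ |⟨θ, e⟩|^r is integrable on the unit sphere S^{d−1} with respect to the surface (uniform) measure: ∫_{S^{d−1}} |⟨θ, e⟩|^r dσ(θ) < ∞. -/
open MeasureTheory
open RealInnerProductSpace

open Set Metric
open scoped ENNReal NNReal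

private lemma abs_rpow_intervalIntegrable {r : ℝ} (hr : -1 < r) :
    IntervalIntegrable (fun t : ℝ => |t| ^ r) volume 0 1 := by
  rw [intervalIntegrable_iff, Set.uIoc_of_le zero_le_one]
  exact (intervalIntegral.intervalIntegrable_rpow' hr (a := 0) (b := 1)).1.congr_fun
    (fun t ht => by rw [abs_of_pos ht.1]) measurableSet_Ioc

private lemma abs_rpow_intervalIntegrable' {r : ℝ} (hr : -1 < r) :
    IntervalIntegrable (fun t : ℝ => |t| ^ r) volume (-1) 1 := by
  have h0 := abs_rpow_intervalIntegrable hr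
  have hneg : IntervalIntegrable (fun t : ℝ => |t| ^ r) volume (-1) 0 := by
    rw [IntervalIntegrable.iff_comp_neg]
    simp only [abs_neg, neg_neg, neg_zero]
    exact h0.symm
  exact hneg.trans h0

private lemma oneD_lt_top {r : ℝ} (hr : -1 < r) :
    ∫⁻ t, (Set.Ioc (-1 : ℝ) 1).indicator (fun t => ENNReal.ofReal (|t| ^ r)) t < ⊤ := by
  rw [lintegral_indicator measurableSet_Ioc]
  have h := abs_rpow_intervalIntegrable' hr
  rw [intervalIntegrable_iff, Set.uIoc_of_le (by norm_num : (-1:ℝ) ≤ 1)] at h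
  exact (hasFiniteIntegral_iff_ofReal
    (Filter.Eventually.of_forall fun t => Real.rpow_nonneg (abs_nonneg _) r)).1 h.2

private lemma euclid_coord_le {m : ℕ} (y : EuclideanSpace ℝ (Fin m)) (i : Fin m) :
    |y i| ≤ ‖y‖ := by
  rw [EuclideanSpace.norm_eq, ← Real.sqrt_sq_eq_abs]
  apply Real.sqrt_le_sqrt
  have : |y i| ^ 2 ≤ ∑ j, ‖y j‖ ^ 2 := by
    have := Finset.single_le_sum (f := fun j => ‖y j‖ ^ 2)
      (fun j _ => by positivity) (Finset.mem_univ i)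
    simpa [Real.norm_eq_abs, sq_abs] using this
  simpa [sq_abs] using this

private lemma ball_lintegral_lt_top {n : ℕ} (e : EuclideanSpace ℝ (Fin (n + 1)))
    (he : ‖e‖ = 1) {r : ℝ} (hr : -1 < r) :
    ∫⁻ x : EuclideanSpace ℝ (Fin (n + 1)),
      (Metric.ball (0 : EuclideanSpace ℝ (Fin (n + 1))) 1).indicator
        (fun y => ENNReal.ofReal (|⟪y, e⟫| ^ r)) x < ⊤ := by
  classical
  -- an orthonormal basis whose 0-th vector is `e`
  have horth : Orthonormal ℝ (Set.restrict {(0 : Fin (n + 1))} (fun _ => e)) := by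
    constructor
    · intro i; exact he
    · intro i j hij
      exact absurd (Subtype.ext ((Set.mem_singleton_iff.1 i.2).trans
        (Set.mem_singleton_iff.1 j.2).symm)) hij
  obtain ⟨b, hb⟩ := horth.exists_orthonormalBasis_extension_of_card_eq (by simp)
  have hb0 : b 0 = e := hb 0 rfl
  have hinner : ∀ x : EuclideanSpace ℝ (Fin (n + 1)), ⟪x, e⟫ = b.repr x 0 := fun x => by
    rw [b.repr_apply_apply, ← hb0, real_inner_comm]
  -- the two factor functions
  set A : ℝ → ℝ≥0∞ := (Set.Ioc (-1 : ℝ) 1).indicator (fun t => ENNReal.ofReal (|t| ^ r)) with hA_def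
  set B : (Fin n → ℝ) → ℝ≥0∞ := (Metric.closedBall (0 : Fin n → ℝ) 1).indicator 1 with hB_def
  have hA : Measurable A := by
    apply Measurable.indicator ?_ measurableSet_Ioc
    fun_prop
  have hB : Measurable B := measurable_one.indicator measurableSet_closedBall
  set G0 : (Fin (n + 1) → ℝ) → ℝ≥0∞ :=
    fun x => A (x 0) * B (fun j => x ((0 : Fin (n + 1)).succAbove j)) with hG0_def
  have hG0 : Measurable G0 := by
    refine Measurable.mul ?_ ?_
    · exact hA.comp (measurable_pi_apply 0)
    · exact hB.comp (measurable_pi_iff.2 fun j => measurable_pi_apply _)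
  have hbound : ∀ x : EuclideanSpace ℝ (Fin (n + 1)),
      (Metric.ball (0 : EuclideanSpace ℝ (Fin (n + 1))) 1).indicator
        (fun y => ENNReal.ofReal (|⟪y, e⟫| ^ r)) x
        ≤ G0 (((MeasurableEquiv.toLp 2 (Fin (n + 1) → ℝ)).symm) (b.repr x)) := by
    intro x
    by_cases hx : x ∈ Metric.ball (0 : EuclideanSpace ℝ (Fin (n + 1))) 1
    · rw [Set.indicator_of_mem hx]
      have hxn : ‖x‖ < 1 := by rwa [mem_ball_zero_iff] at hx
      have hcoord : ∀ i, |b.repr x i| ≤ ‖x‖ := fun i => by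
        simpa [b.repr.norm_map] using euclid_coord_le (b.repr x) i
      show ENNReal.ofReal (|⟪x, e⟫| ^ r)
        ≤ A (b.repr x 0) * B (fun j => b.repr x ((0 : Fin (n + 1)).succAbove j))
      have h0mem : b.repr x 0 ∈ Set.Ioc (-1 : ℝ) 1 := by
        have := (hcoord 0).trans_lt hxn
        rw [abs_lt] at this
        exact ⟨this.1, this.2.le⟩
      have hBmem : (fun j => b.repr x ((0 : Fin (n + 1)).succAbove j))
          ∈ Metric.closedBall (0 : Fin n → ℝ) 1 := by
        rw [mem_closedBall_zero_iff]
        refine pi_norm_le_iff_of_nonneg zero_le_one |>.2 fun j => ?_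
        rw [Real.norm_eq_abs]
        exact ((hcoord _).trans hxn.le)
      rw [hA_def, hB_def, Set.indicator_of_mem h0mem, Set.indicator_of_mem hBmem,
        Pi.one_apply, mul_one, hinner x]
    · rw [Set.indicator_of_notMem hx]
      exact zero_le
  have hAB : Measurable fun p : ℝ × (Fin n → ℝ) => A p.1 * B p.2 :=
    (hA.comp measurable_fst).mul (hB.comp measurable_snd)
  calc ∫⁻ x : EuclideanSpace ℝ (Fin (n + 1)),
      (Metric.ball (0 : EuclideanSpace ℝ (Fin (n + 1))) 1).indicator
        (fun y => ENNReal.ofReal (|⟪y, e⟫| ^ r)) x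
      ≤ ∫⁻ x, G0 (((MeasurableEquiv.toLp 2 (Fin (n + 1) → ℝ)).symm) (b.repr x)) :=
        lintegral_mono hbound
    _ = ∫⁻ x : Fin (n + 1) → ℝ, G0 x := by
        exact ((EuclideanSpace.volume_preserving_symm_measurableEquiv_toLp (Fin (n + 1))).comp
          b.measurePreserving_repr).lintegral_comp hG0
    _ = ∫⁻ p : ℝ × (Fin n → ℝ), A p.1 * B p.2 := by
        rw [← (volume_preserving_piFinSuccAbove (fun _ : Fin (n + 1) => ℝ) 0).lintegral_comp hAB]
        refine lintegral_congr fun x => ?_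
        simp [G0, MeasurableEquiv.piFinSuccAbove, Fin.tail]
        rfl
    _ = (∫⁻ t, A t) * ∫⁻ z, B z := by
        rw [Measure.volume_eq_prod]
        exact lintegral_prod_mul hA.aemeasurable hB.aemeasurable
    _ < ⊤ := by
        refine ENNReal.mul_lt_top (oneD_lt_top hr) ?_
        rw [hB_def, lintegral_indicator_one measurableSet_closedBall]
        exact measure_closedBall_lt_top

/-- For `d ≥ 2`, a unit vector `e ∈ ℝ^d` and `r > -1`, the function `θ ↦ |⟨θ, e⟩|^r` is
integrable on the unit sphere `S^{d-1}` with respect to the surface measure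
(`volume.toSphere`). -/
theorem sphere_inner_rpow_integrable
    (d : ℕ) (hd : 2 ≤ d) (e : EuclideanSpace ℝ (Fin d)) (he : ‖e‖ = 1)
    (r : ℝ) (hr : -1 < r) :
    ∫⁻ θ : Metric.sphere (0 : EuclideanSpace ℝ (Fin d)) 1,
        ENNReal.ofReal (|⟪(θ : EuclideanSpace ℝ (Fin d)), e⟫| ^ r)
        ∂((volume : Measure (EuclideanSpace ℝ (Fin d))).toSphere) < ⊤ := by
  classical
  obtain ⟨n, rfl⟩ : ∃ n, d = n + 1 := ⟨d - 1, by omega⟩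
  set ν : Measure (Set.Ioi (0 : ℝ)) :=
    Measure.volumeIoiPow (Module.finrank ℝ (EuclideanSpace ℝ (Fin (n + 1))) - 1) with hν_def
  set x1 : Set.Ioi (0 : ℝ) := ⟨1, Set.mem_Ioi.2 one_pos⟩ with hx1_def
  set F : Set.Ioi (0 : ℝ) → ℝ≥0∞ :=
    (Set.Iio x1).indicator (fun t => ENNReal.ofReal ((t : ℝ) ^ r)) with hF_def
  have hIio : MeasurableSet (Set.Iio x1) := by
    have h : (Set.Iio x1 : Set (Set.Ioi (0 : ℝ))) = Subtype.val ⁻¹' Set.Iio (1 : ℝ) := by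
      ext t
      simp [x1, Set.mem_Iio, ← Subtype.coe_lt_coe]
    rw [h]
    exact measurable_subtype_coe measurableSet_Iio
  have hF : Measurable F := by
    apply Measurable.indicator ?_ hIio
    fun_prop
  set g : Metric.sphere (0 : EuclideanSpace ℝ (Fin (n + 1))) 1 → ℝ≥0∞ :=
    fun θ => ENNReal.ofReal (|⟪(θ : EuclideanSpace ℝ (Fin (n + 1))), e⟫| ^ r) with hg_def
  have hg : Measurable g := by
    have h1 : Measurable fun θ : Metric.sphere (0 : EuclideanSpace ℝ (Fin (n + 1))) 1 =>
        ⟪(θ : EuclideanSpace ℝ (Fin (n + 1))), e⟫ :=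
      (Continuous.inner continuous_subtype_val continuous_const).measurable
    have h2 : Measurable fun s : ℝ => ENNReal.ofReal (|s| ^ r) := by fun_prop
    exact h2.comp h1
  set K : Metric.sphere (0 : EuclideanSpace ℝ (Fin (n + 1))) 1 × Set.Ioi (0 : ℝ) → ℝ≥0∞ :=
    fun p => g p.1 * F p.2 with hK_def
  have hK : Measurable K := (hg.comp measurable_fst).mul (hF.comp measurable_snd)
  have mp := (volume :
    Measure (EuclideanSpace ℝ (Fin (n + 1)))).measurePreserving_homeomorphUnitSphereProd
  -- the radial factor is nonzero
  have hc0 : ∫⁻ t, F t ∂ν ≠ 0 := by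
    intro hc
    rw [lintegral_eq_zero_iff hF] at hc
    have h0 : ν {t | F t ≠ 0} = 0 := by
      simpa [Filter.EventuallyEq, ae_iff] using hc
    have hsub : (Set.Iio x1 : Set (Set.Ioi (0 : ℝ))) ⊆ {t | F t ≠ 0} := by
      intro t ht
      simp only [Set.mem_setOf_eq, hF_def, Set.indicator_of_mem ht]
      exact (ENNReal.ofReal_pos.2 (Real.rpow_pos_of_pos t.2 r)).ne'
    have hz := measure_mono_null hsub h0
    rw [hν_def, Measure.volumeIoiPow_apply_Iio, ENNReal.ofReal_eq_zero] at hz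
    have h1 : ((x1 : ℝ)) = 1 := rfl
    rw [h1, one_pow] at hz
    exact absurd hz (by positivity : (0:ℝ) <
      1 / ((Module.finrank ℝ (EuclideanSpace ℝ (Fin (n + 1))) - 1 : ℕ) + 1)).not_ge
  -- pointwise identification under the polar homeomorphism
  have step : ∀ x : ({(0 : EuclideanSpace ℝ (Fin (n + 1)))}ᶜ : Set _),
      K (homeomorphUnitSphereProd (EuclideanSpace ℝ (Fin (n + 1))) x)
        = (Metric.ball (0 : EuclideanSpace ℝ (Fin (n + 1))) 1).indicator
            (fun y => ENNReal.ofReal (|⟪y, e⟫| ^ r)) (x : EuclideanSpace ℝ (Fin (n + 1))) := by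
    intro x
    have hx0 : (x : EuclideanSpace ℝ (Fin (n + 1))) ≠ 0 := x.2
    have hxn : (0 : ℝ) < ‖(x : EuclideanSpace ℝ (Fin (n + 1)))‖ := norm_pos_iff.2 hx0
    have hsnd : ((homeomorphUnitSphereProd (EuclideanSpace ℝ (Fin (n + 1))) x).2 : ℝ)
        = ‖(x : EuclideanSpace ℝ (Fin (n + 1)))‖ := by simp
    have hfst : ((homeomorphUnitSphereProd (EuclideanSpace ℝ (Fin (n + 1))) x).1 :
        EuclideanSpace ℝ (Fin (n + 1)))
        = ‖(x : EuclideanSpace ℝ (Fin (n + 1)))‖⁻¹ • (x : EuclideanSpace ℝ (Fin (n + 1))) := by simp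
    by_cases hlt : ‖(x : EuclideanSpace ℝ (Fin (n + 1)))‖ < 1
    · rw [Set.indicator_of_mem (mem_ball_zero_iff.2 hlt)]
      have hmem : (homeomorphUnitSphereProd (EuclideanSpace ℝ (Fin (n + 1))) x).2
          ∈ Set.Iio x1 := by
        rw [Set.mem_Iio, ← Subtype.coe_lt_coe, hsnd]
        exact hlt
      show g _ * F _ = _
      rw [hF_def, Set.indicator_of_mem hmem, hg_def]
      simp only [hfst, hsnd]
      rw [real_inner_smul_left, abs_mul, abs_of_pos (inv_pos.2 hxn),
        Real.mul_rpow (by positivity) (abs_nonneg _),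
        ← ENNReal.ofReal_mul (by positivity), mul_right_comm,
        ← Real.mul_rpow (by positivity) hxn.le, inv_mul_cancel₀ hxn.ne', Real.one_rpow, one_mul]
    · rw [Set.indicator_of_notMem (fun hmem => hlt (mem_ball_zero_iff.1 hmem))]
      have hmem : (homeomorphUnitSphereProd (EuclideanSpace ℝ (Fin (n + 1))) x).2
          ∉ Set.Iio x1 := by
        rw [Set.mem_Iio, ← Subtype.coe_lt_coe, hsnd]
        exact hlt
      show g _ * F _ = 0
      rw [hF_def, Set.indicator_of_notMem hmem, mul_zero]
  -- the product is finite
  have key : (∫⁻ θ, g θ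
      ∂((volume : Measure (EuclideanSpace ℝ (Fin (n + 1)))).toSphere)) * (∫⁻ t, F t ∂ν) < ⊤ := by
    calc (∫⁻ θ, g θ ∂((volume : Measure (EuclideanSpace ℝ (Fin (n + 1)))).toSphere))
          * (∫⁻ t, F t ∂ν)
        = ∫⁻ p, K p ∂(((volume :
            Measure (EuclideanSpace ℝ (Fin (n + 1)))).toSphere).prod ν) :=
          (lintegral_prod_mul hg.aemeasurable hF.aemeasurable).symm
      _ = ∫⁻ x : ({(0 : EuclideanSpace ℝ (Fin (n + 1)))}ᶜ : Set _),
            K (homeomorphUnitSphereProd (EuclideanSpace ℝ (Fin (n + 1))) x)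
            ∂((volume : Measure (EuclideanSpace ℝ (Fin (n + 1)))).comap Subtype.val) :=
          (mp.lintegral_comp hK).symm
      _ = ∫⁻ x : ({(0 : EuclideanSpace ℝ (Fin (n + 1)))}ᶜ : Set _),
            (Metric.ball (0 : EuclideanSpace ℝ (Fin (n + 1))) 1).indicator
              (fun y => ENNReal.ofReal (|⟪y, e⟫| ^ r)) (x : EuclideanSpace ℝ (Fin (n + 1)))
            ∂((volume : Measure (EuclideanSpace ℝ (Fin (n + 1)))).comap Subtype.val) :=
          lintegral_congr step
      _ = ∫⁻ x in ({(0 : EuclideanSpace ℝ (Fin (n + 1)))}ᶜ : Set _),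
            (Metric.ball (0 : EuclideanSpace ℝ (Fin (n + 1))) 1).indicator
              (fun y => ENNReal.ofReal (|⟪y, e⟫| ^ r)) x ∂volume :=
          lintegral_subtype_comap (measurableSet_singleton _).compl _
      _ ≤ ∫⁻ x, (Metric.ball (0 : EuclideanSpace ℝ (Fin (n + 1))) 1).indicator
              (fun y => ENNReal.ofReal (|⟪y, e⟫| ^ r)) x ∂volume :=
          setLIntegral_le_lintegral _ _
      _ < ⊤ := ball_lintegral_lt_top e he hr
  by_contra hcon
  push_neg at hcon
  have htop : ∫⁻ θ, g θ ∂((volume : Measure (EuclideanSpace ℝ (Fin (n + 1)))).toSphere) = ⊤ :=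
    top_le_iff.1 hcon
  rw [htop, ENNReal.top_mul hc0] at key
  exact lt_irrefl _ key
end
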